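/- Combining the two-sided bounds: under the assumptions that (i) with probability ≥ 1 − δ/2, the terms involving u_m and û_m satisfy Δ(u_m, û_m, y*) + Δ(û_m, u_m, ŷ) ≤ A(n, δ), and (ii) the Lipschitz smoothness assumption on u holds, the regret Regret_n = u_h(y*) − u_h(ŷ) satisfies, with probability at least 1 − δ, Regret_n ≤ A(n, δ) + 2·WD(P_human, P_model). -/
import Mathlib


open Finset MeasureTheory

/-- The Wasserstein distance on a finite set with cost `C`, as the infimum of
coupling costs. -/
noncomputable def WD {Y : Type*} [Fintype Y] (C : Y → Y → ℝ) (ν μ : Y → ℝ) : ℝ :=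
  sInf { c : ℝ | ∃ γ : Y → Y → ℝ,
    (∀ i j, 0 ≤ γ i j) ∧
    (∀ i, ∑ j, γ i j = ν i) ∧
    (∀ j, ∑ i, γ i j = μ j) ∧
    c = ∑ i, ∑ j, γ i j * C i j }

lemma wd_bound {Y : Type*} [Fintype Y]
    (u : Y → Y → ℝ) (C : Y → Y → ℝ)
    (hLip : ∀ y y' y'', |u y y' - u y y''| ≤ C y' y'')
    (Ph Pm : Y → ℝ)
    (hPh : ∀ y, 0 ≤ Ph y) (hPh1 : ∑ y, Ph y = 1)
    (hPm : ∀ y, 0 ≤ Pm y) (hPm1 : ∑ y, Pm y = 1) (y : Y) :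
    |(∑ y', u y y' * Ph y') - ∑ y', u y y' * Pm y'| ≤ WD C Ph Pm := by
  apply le_csInf
  · refine ⟨∑ i, ∑ j, (Ph i * Pm j) * C i j, fun i j => Ph i * Pm j,
      fun i j => mul_nonneg (hPh i) (hPm j), ?_, ?_, rfl⟩
    · intro i; rw [← Finset.mul_sum, hPm1, mul_one]
    · intro j; rw [← Finset.sum_mul, hPh1, one_mul]
  · rintro c ⟨γ, hnn, hrow, hcol, rfl⟩
    have h1 : (∑ y', u y y' * Ph y') = ∑ i, ∑ j, u y i * γ i j := by
      refine Finset.sum_congr rfl fun i _ => ?_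
      rw [← hrow i, Finset.mul_sum]
    have h2 : (∑ y', u y y' * Pm y') = ∑ i, ∑ j, u y j * γ i j := by
      rw [Finset.sum_comm]
      refine Finset.sum_congr rfl fun j _ => ?_
      rw [← hcol j, Finset.mul_sum]
    rw [h1, h2, ← Finset.sum_sub_distrib]
    calc |∑ i, ((∑ j, u y i * γ i j) - ∑ j, u y j * γ i j)|
        ≤ ∑ i, |(∑ j, u y i * γ i j) - ∑ j, u y j * γ i j| :=
          Finset.abs_sum_le_sum_abs _ _
      _ ≤ ∑ i, ∑ j, γ i j * C i j := by
          refine Finset.sum_le_sum fun i _ => ?_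
          rw [← Finset.sum_sub_distrib]
          calc |∑ j, (u y i * γ i j - u y j * γ i j)|
              ≤ ∑ j, |u y i * γ i j - u y j * γ i j| := Finset.abs_sum_le_sum_abs _ _
            _ ≤ ∑ j, γ i j * C i j := by
                refine Finset.sum_le_sum fun j _ => ?_
                rw [← sub_mul, abs_mul, abs_of_nonneg (hnn i j), mul_comm]
                exact mul_le_mul_of_nonneg_left (hLip y i j) (hnn i j)

/-- Regret bound for MBR decoding: combining a high-probability bound
`A(n,δ)` on the middle (Monte Carlo) terms with the deterministic Wasserstein bound
on the outer terms yields `Regret_n ≤ A(n,δ) + 2·WD(P_human, P_model)` with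
probability at least `1 − δ`. -/
theorem stmt_10 {Y : Type*} [Fintype Y]
    {Ω : Type*} [MeasurableSpace Ω] (μ : Measure Ω) [IsProbabilityMeasure μ]
    (n : ℕ) (hn : 0 < n)
    (u : Y → Y → ℝ) (hu : ∀ y y', u y y' ∈ Set.Icc (0:ℝ) 1)
    (C : Y → Y → ℝ) (hC : ∀ y' y'', 0 ≤ C y' y'')
    (hLip : ∀ y y' y'', |u y y' - u y y''| ≤ C y' y'')
    (Phuman Pmodel : Y → ℝ)
    (hPh : ∀ y, 0 ≤ Phuman y) (hPh1 : ∑ y, Phuman y = 1)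
    (hPm : ∀ y, 0 ≤ Pmodel y) (hPm1 : ∑ y, Pmodel y = 1)
    (uh um : Y → ℝ)
    (huh : ∀ y, uh y = ∑ y', u y y' * Phuman y')
    (hum : ∀ y, um y = ∑ y', u y y' * Pmodel y')
    (Xs : Fin n → Ω → Y)
    (umhat : Y → Ω → ℝ)
    (humhat : ∀ y ω, umhat y ω = (1 / (n : ℝ)) * ∑ i, u y (Xs i ω))
    (ystar : Y) (hystar : ∀ y, uh y ≤ uh ystar)
    (yhat : Ω → Y)
    (hyhat : ∀ ω i, umhat (Xs i ω) ω ≤ umhat (yhat ω) ω)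
    (hkey : ∀ ω, umhat ystar ω ≤ umhat (yhat ω) ω)
    (δ : ℝ) (hδ : δ ∈ Set.Ioo (0:ℝ) 1)
    (A : ℝ)
    (hA : ENNReal.ofReal (1 - δ / 2) ≤
      μ {ω | (um ystar - umhat ystar ω) + (umhat (yhat ω) ω - um (yhat ω)) ≤ A}) :
    ENNReal.ofReal (1 - δ) ≤
      μ {ω | uh ystar - uh (yhat ω) ≤ A + 2 * WD C Phuman Pmodel} := by
  have hwd : ∀ y, |uh y - um y| ≤ WD C Phuman Pmodel := by
    intro y; rw [huh, hum]
    exact wd_bound u C hLip Phuman Pmodel hPh hPh1 hPm hPm1 y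
  have hsub : {ω | (um ystar - umhat ystar ω) + (umhat (yhat ω) ω - um (yhat ω)) ≤ A} ⊆
      {ω | uh ystar - uh (yhat ω) ≤ A + 2 * WD C Phuman Pmodel} := by
    intro ω hω
    simp only [Set.mem_setOf_eq] at hω ⊢
    have h1 := (abs_le.mp (hwd ystar)).2
    have h2 := (abs_le.mp (hwd (yhat ω))).1
    have h3 := hkey ω
    linarith
  calc ENNReal.ofReal (1 - δ) ≤ ENNReal.ofReal (1 - δ / 2) := by
        apply ENNReal.ofReal_le_ofReal; linarith [hδ.1]
    _ ≤ μ _ := hA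
    _ ≤ _ := measure_mono hsub
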